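/- Let Y be a particle-generated Nevanlinna function with particle sequence x : ℕ → ℝ and constants b ∈ ℝ, c ≥ 0. Then for every integer k ≥ 1 and every w ∈ ℍ, the k-th complex derivative of Y satisfies |Y^{(k)}(w)| ≤ k! · Im Y(w) / (Im w)^k; moreover Im Y(w) ≤ |Y(w)|, so also |Y^{(k)}(w)| ≤ k! · |Y(w)| / (Im w)^k. -/

import Mathlib

lemma nev_abs_im (x : ℝ) (z : ℂ) : z.im ≤ ‖(x:ℂ) - z‖ := by
  have h1 : ((x:ℂ) - z).im = -z.im := by simp
  have h2 : |(-z.im)| ≤ ‖(x:ℂ) - z‖ := h1 ▸ Complex.abs_im_le_norm _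
  rw [abs_neg] at h2
  exact (le_abs_self _).trans h2

lemma nev_aux1 (x v R : ℝ) (hv : 0 < v) (z : ℂ) (him : v ≤ z.im) (hzR : ‖z‖ ≤ R) :
    1 + x ^ 2 ≤ ((1 + (2*R+2)^2)/v^2 + 5) * ‖(x:ℂ) - z‖ ^ 2 := by
  have hR0 : 0 ≤ R := (norm_nonneg z).trans hzR
  have himA : v ≤ ‖(x:ℂ) - z‖ := him.trans (nev_abs_im x z)
  have hreA : |x| - R ≤ ‖(x:ℂ) - z‖ := by
    have h3 : ((x:ℂ) - z).re = x - z.re := by simp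
    have h4 : |x - z.re| ≤ ‖(x:ℂ) - z‖ := h3 ▸ Complex.abs_re_le_norm _
    have h5 : |z.re| ≤ R := (Complex.abs_re_le_norm z).trans hzR
    have h6 := abs_sub_abs_le_abs_sub x z.re
    linarith
  set A := ‖(x:ℂ) - z‖ with hA
  have hA0 : 0 ≤ A := norm_nonneg _
  have hD : 0 ≤ (1 + (2*R+2)^2)/v^2 := by positivity
  by_cases hcase : |x| ≤ 2*R+2
  · have hx2 : x^2 ≤ (2*R+2)^2 := by nlinarith [abs_nonneg x, sq_abs x]
    have hAv : v^2 ≤ A^2 := by nlinarith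
    have hdiv : (1 + (2*R+2)^2)/v^2 * v^2 = 1 + (2*R+2)^2 := by field_simp
    nlinarith [mul_nonneg hD (sub_nonneg.2 hAv), sq_nonneg A]
  · push_neg at hcase
    have h6 : |x|/2 ≤ A := by linarith
    have hA2 : x^2/4 ≤ A^2 := by nlinarith [abs_nonneg x, sq_abs x]
    have hx4 : 4 ≤ x^2 := by nlinarith [sq_abs x]
    nlinarith [mul_nonneg hD (sq_nonneg A)]

lemma nev_aux2 (x v R : ℝ) (hv : 0 < v) (z : ℂ) (him : v ≤ z.im) (hzR : ‖z‖ ≤ R) :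
    1 + |x| ≤ ((1 + (2*R+2))/v + 3) * ‖(x:ℂ) - z‖ := by
  have hR0 : 0 ≤ R := (norm_nonneg z).trans hzR
  have himA : v ≤ ‖(x:ℂ) - z‖ := him.trans (nev_abs_im x z)
  have hreA : |x| - R ≤ ‖(x:ℂ) - z‖ := by
    have h3 : ((x:ℂ) - z).re = x - z.re := by simp
    have h4 : |x - z.re| ≤ ‖(x:ℂ) - z‖ := h3 ▸ Complex.abs_re_le_norm _
    have h5 : |z.re| ≤ R := (Complex.abs_re_le_norm z).trans hzR
    have h6 := abs_sub_abs_le_abs_sub x z.re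
    linarith
  set A := ‖(x:ℂ) - z‖ with hA
  have hA0 : 0 ≤ A := norm_nonneg _
  have hD : 0 ≤ (1 + (2*R+2))/v := by positivity
  by_cases hcase : |x| ≤ 2*R+2
  · have hdiv : (1 + (2*R+2))/v * v = 1 + (2*R+2) := by field_simp
    nlinarith [mul_nonneg hD (sub_nonneg.2 himA)]
  · push_neg at hcase
    have h6 : |x|/2 ≤ A := by linarith
    nlinarith [mul_nonneg hD hA0, abs_nonneg x]

lemma nev_hder (a : ℂ) (m : ℕ) (z : ℂ) (hz : a - z ≠ 0) :
    HasDerivAt (fun z => (a - z)⁻¹ ^ (m+1)) ((m+1 : ℕ) * (a - z)⁻¹ ^ (m+2)) z := by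
  have h1 : HasDerivAt (fun z : ℂ => a - z) (-1) z := (hasDerivAt_id z).const_sub a
  have h2 := h1.inv hz
  have h3 := h2.pow (m+1)
  have h4 : HasDerivAt (fun z => (a - z)⁻¹ ^ (m+1))
      (↑(m + 1) * (a - z)⁻¹ ^ (m + 1 - 1) * (- -1 / (a - z) ^ 2)) z := h3
  convert h4 using 1
  rw [Nat.add_sub_cancel, neg_neg, one_div, ← inv_pow]
  ring

lemma nev_normbound (x : ℝ) (v C : ℝ) (hv : 0 < v) (m : ℕ) (z : ℂ)
    (hAv : v ≤ ‖(x:ℂ) - z‖)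
    (hCb : 1 + x ^ 2 ≤ C * ‖(x:ℂ) - z‖ ^ 2) :
    ‖((x:ℂ) - z)⁻¹ ^ (m+2)‖ ≤ (1/v)^m * (C * (1/(1 + x ^ 2))) := by
  set A := ‖(x:ℂ) - z‖ with hA
  have hA0 : 0 < A := lt_of_lt_of_le hv hAv
  have hp : (0:ℝ) < 1 + x ^ 2 := by positivity
  have h1 : ‖((x:ℂ) - z)⁻¹ ^ (m+2)‖ = (A⁻¹)^m * (A⁻¹)^2 := by
    rw [norm_pow, norm_inv, ← hA, ← pow_add]
  rw [h1]
  have h2 : A⁻¹ ≤ 1/v := by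
    rw [one_div]
    exact inv_anti₀ hv hAv
  have h3 : (A⁻¹)^2 ≤ C * (1/(1 + x ^ 2)) := by
    rw [inv_pow, mul_one_div, ← one_div, div_le_div_iff₀ (by positivity) hp]
    nlinarith
  exact mul_le_mul (pow_le_pow_left₀ (inv_nonneg.2 hA0.le) h2 m) h3 (by positivity) (by positivity)

lemma nev_inv_sq_bound (x : ℝ) (v C : ℝ) (hv : 0 < v) (z : ℂ)
    (hAv : v ≤ ‖(x:ℂ) - z‖)
    (hCb : 1 + x ^ 2 ≤ C * ‖(x:ℂ) - z‖ ^ 2) :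
    (‖(x:ℂ) - z‖ ^ 2)⁻¹ ≤ C * (1/(1 + x ^ 2)) := by
  have hA0 : 0 < ‖(x:ℂ) - z‖ := lt_of_lt_of_le hv hAv
  have hp : (0:ℝ) < 1 + x ^ 2 := by positivity
  rw [mul_one_div, ← one_div, div_le_div_iff₀ (by positivity) hp]
  nlinarith

lemma nev_pow_bound (x v : ℝ) (hv : 0 < v) (n : ℕ) (z : ℂ)
    (hAv : v ≤ ‖(x:ℂ) - z‖) :
    ‖((x:ℂ) - z)⁻¹ ^ (n+2)‖ ≤ (1/v)^n * (‖(x:ℂ) - z‖ ^ 2)⁻¹ := by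
  set A := ‖(x:ℂ) - z‖ with hA
  have hA0 : 0 < A := lt_of_lt_of_le hv hAv
  have h1 : ‖((x:ℂ) - z)⁻¹ ^ (n+2)‖ = (A⁻¹)^n * (A^2)⁻¹ := by
    rw [norm_pow, norm_inv, ← hA]
    ring
  rw [h1]
  have h2 : A⁻¹ ≤ 1/v := by
    rw [one_div]
    exact inv_anti₀ hv hAv
  exact mul_le_mul_of_nonneg_right (pow_le_pow_left₀ (inv_nonneg.2 hA0.le) h2 n)
    (by positivity)

lemma nev_summable_u (x : ℕ → ℝ) (hx : Summable fun i => 1 / (1 + x i ^ 2)) (v C : ℝ) (m : ℕ) :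
    Summable (fun i => (1/v)^m * (C * (1/(1 + x i ^ 2)))) :=
  (hx.mul_left C).mul_left _

lemma nev_term_diffOn (x : ℝ) (m : ℕ) (U : Set ℂ) (hne : ∀ z ∈ U, (x:ℂ) - z ≠ 0) :
    DifferentiableOn ℂ (fun z => ((x:ℂ) - z)⁻¹ ^ (m+2)) U :=
  (((differentiableOn_const _).sub differentiableOn_id).inv hne).pow _

lemma nev_S_diffOn (x : ℕ → ℝ) (hx : Summable fun i => 1 / (1 + x i ^ 2))
    (U : Set ℂ) (hUo : IsOpen U) (v C : ℝ) (hv : 0 < v)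
    (hAv : ∀ z ∈ U, ∀ i, v ≤ ‖(x i:ℂ) - z‖)
    (hCb : ∀ z ∈ U, ∀ i, 1 + x i ^ 2 ≤ C * ‖(x i:ℂ) - z‖ ^ 2) (m : ℕ) :
    DifferentiableOn ℂ (fun z => ∑' i, ((x i:ℂ) - z)⁻¹ ^ (m+2)) U := by
  have hne : ∀ i, ∀ z ∈ U, (x i:ℂ) - z ≠ 0 := by
    intro i z hz h0
    have := hAv z hz i
    rw [h0] at this
    simp at this
    linarith
  exact Complex.differentiableOn_tsum_of_summable_norm (nev_summable_u x hx v C m)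
    (fun i => nev_term_diffOn (x i) m U (hne i)) hUo
    (fun i z hz => nev_normbound (x i) v C hv m z (hAv z hz i) (hCb z hz i))

lemma nev_S_summable (x : ℕ → ℝ) (hx : Summable fun i => 1 / (1 + x i ^ 2))
    (v C : ℝ) (hv : 0 < v) (m : ℕ) (z : ℂ)
    (hAv : ∀ i, v ≤ ‖(x i:ℂ) - z‖)
    (hCb : ∀ i, 1 + x i ^ 2 ≤ C * ‖(x i:ℂ) - z‖ ^ 2) :
    Summable (fun i => ((x i:ℂ) - z)⁻¹ ^ (m+2)) :=
  Summable.of_norm_bounded (nev_summable_u x hx v C m)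
    (fun i => nev_normbound (x i) v C hv m z (hAv i) (hCb i))

lemma nev_S_deriv (x : ℕ → ℝ) (hx : Summable fun i => 1 / (1 + x i ^ 2))
    (U : Set ℂ) (hUo : IsOpen U) (v C : ℝ) (hv : 0 < v)
    (hAv : ∀ z ∈ U, ∀ i, v ≤ ‖(x i:ℂ) - z‖)
    (hCb : ∀ z ∈ U, ∀ i, 1 + x i ^ 2 ≤ C * ‖(x i:ℂ) - z‖ ^ 2)
    (m : ℕ) (z : ℂ) (hz : z ∈ U) :
    deriv (fun z => ∑' i, ((x i:ℂ) - z)⁻¹ ^ (m+2)) z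
      = ((m+2 : ℕ) : ℂ) * ∑' i, ((x i:ℂ) - z)⁻¹ ^ (m+3) := by
  have hne : ∀ i, ∀ z ∈ U, (x i:ℂ) - z ≠ 0 := by
    intro i z hz h0
    have := hAv z hz i
    rw [h0] at this
    simp at this
    linarith
  have h := Complex.hasSum_deriv_of_summable_norm (nev_summable_u x hx v C m)
    (fun i => nev_term_diffOn (x i) m U (hne i)) hUo
    (fun i w hw => nev_normbound (x i) v C hv m w (hAv w hw i) (hCb w hw i)) hz
  have heq : (fun i => deriv (fun w => ((x i:ℂ) - w)⁻¹ ^ (m+2)) z)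
      = fun i => ((m+2 : ℕ) : ℂ) * ((x i:ℂ) - z)⁻¹ ^ (m+3) := by
    funext i
    exact (nev_hder ((x i:ℂ)) (m+1) z (hne i z hz)).deriv
  rw [heq] at h
  have h2 : HasSum (fun i => ((m+2 : ℕ) : ℂ) * ((x i:ℂ) - z)⁻¹ ^ (m+3))
      (((m+2 : ℕ) : ℂ) * ∑' i, ((x i:ℂ) - z)⁻¹ ^ (m+3)) :=
    (nev_S_summable x hx v C hv (m+1) z (hAv z hz) (hCb z hz)).hasSum.mul_left _
  exact h.unique h2

lemma nev_one_add_sq_ne (x : ℝ) : (1:ℂ) + (x:ℂ)^2 ≠ 0 := by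
  have h : ((1 + x^2 : ℝ) : ℂ) = 1 + (x:ℂ)^2 := by push_cast; ring
  rw [← h]
  exact_mod_cast (by positivity : (1+x^2:ℝ) ≠ 0)

lemma nev_f_eq (x : ℝ) (z : ℂ) (hz : (x:ℂ) - z ≠ 0) :
    ((x:ℂ) - z)⁻¹ - (x:ℂ)/(1+(x:ℂ)^2) = (1 + (x:ℂ)*z)/(((x:ℂ) - z)*(1+(x:ℂ)^2)) := by
  have h1 := nev_one_add_sq_ne x
  field_simp
  ring

lemma nev_f_bound (x v R : ℝ) (hv : 0 < v) (z : ℂ) (him : v ≤ z.im) (hzR : ‖z‖ ≤ R) :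
    ‖((x:ℂ) - z)⁻¹ - (x:ℂ)/(1+(x:ℂ)^2)‖
      ≤ ((1+R) * ((1 + (2*R+2))/v + 3)) * (1/(1 + x^2)) := by
  have hR0 : 0 ≤ R := (norm_nonneg z).trans hzR
  have hAv : v ≤ ‖(x:ℂ) - z‖ := him.trans (nev_abs_im x z)
  have hA0 : 0 < ‖(x:ℂ) - z‖ := lt_of_lt_of_le hv hAv
  have hne : (x:ℂ) - z ≠ 0 := by
    intro h0; rw [h0] at hA0; simp at hA0
  have hp : (0:ℝ) < 1 + x^2 := by positivity
  rw [nev_f_eq x z hne]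
  have habs : ‖(1:ℂ) + (x:ℂ)^2‖ = 1 + x^2 := by
    have h : ((1 + x^2 : ℝ) : ℂ) = 1 + (x:ℂ)^2 := by push_cast; ring
    rw [← h, Complex.norm_real]
    exact abs_of_pos hp
  simp only [norm_div, norm_mul, habs]
  have hnum : ‖(1:ℂ) + (x:ℂ)*z‖ ≤ (1+R) * (1+|x|) := by
    have h1 : ‖(1:ℂ) + (x:ℂ)*z‖ ≤ 1 + |x| * R := by
      calc ‖(1:ℂ) + (x:ℂ)*z‖ ≤ ‖(1:ℂ)‖ + ‖(x:ℂ)*z‖ := norm_add_le _ _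
        _ = 1 + |x| * ‖z‖ := by
            rw [norm_mul, Complex.norm_real, norm_one, Real.norm_eq_abs]
        _ ≤ 1 + |x| * R := by nlinarith [abs_nonneg x]
    nlinarith [abs_nonneg x]
  have haux := nev_aux2 x v R hv z him hzR
  rw [div_le_iff₀ (by positivity)]
  have hcancel : (1+R) * ((1 + (2*R+2))/v + 3) * (1/(1 + x^2))
        * (‖(x:ℂ) - z‖ * (1 + x^2))
      = (1+R) * (((1 + (2*R+2))/v + 3) * ‖(x:ℂ) - z‖) := by
    field_simp
  rw [hcancel]
  calc ‖(1:ℂ) + (x:ℂ)*z‖ ≤ (1+R) * (1+|x|) := hnum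
    _ ≤ (1+R) * (((1 + (2*R+2))/v + 3) * ‖(x:ℂ) - z‖) :=
        mul_le_mul_of_nonneg_left haux (by positivity)

lemma nev_G_diffOn (x : ℕ → ℝ) (hx : Summable fun i => 1 / (1 + x i ^ 2))
    (U : Set ℂ) (hUo : IsOpen U) (K : ℝ)
    (hb : ∀ i, ∀ z ∈ U, ‖((x i:ℂ) - z)⁻¹ - (x i:ℂ)/(1+(x i:ℂ)^2)‖ ≤ K * (1/(1 + x i ^ 2)))
    (hne : ∀ i, ∀ z ∈ U, (x i:ℂ) - z ≠ 0) :
    DifferentiableOn ℂ (fun z => ∑' i, (((x i:ℂ) - z)⁻¹ - (x i:ℂ)/(1+(x i:ℂ)^2))) U :=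
  Complex.differentiableOn_tsum_of_summable_norm (hx.mul_left K)
    (fun i => (((differentiableOn_const _).sub differentiableOn_id).inv (hne i)).sub_const _)
    hUo (fun i z hz => hb i z hz)

lemma nev_G_deriv (x : ℕ → ℝ) (hx : Summable fun i => 1 / (1 + x i ^ 2))
    (U : Set ℂ) (hUo : IsOpen U) (K : ℝ)
    (hb : ∀ i, ∀ z ∈ U, ‖((x i:ℂ) - z)⁻¹ - (x i:ℂ)/(1+(x i:ℂ)^2)‖ ≤ K * (1/(1 + x i ^ 2)))
    (hne : ∀ i, ∀ z ∈ U, (x i:ℂ) - z ≠ 0)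
    (z : ℂ) (hz : z ∈ U)
    (hsum2 : Summable (fun i => ((x i:ℂ) - z)⁻¹ ^ 2)) :
    deriv (fun z => ∑' i, (((x i:ℂ) - z)⁻¹ - (x i:ℂ)/(1+(x i:ℂ)^2))) z
      = ∑' i, ((x i:ℂ) - z)⁻¹ ^ 2 := by
  have h := Complex.hasSum_deriv_of_summable_norm (hx.mul_left K)
    (fun i => (((differentiableOn_const _).sub differentiableOn_id).inv (hne i)).sub_const _)
    hUo (fun i w hw => hb i w hw) hz
  have heq : (fun i => deriv (fun w => ((x i:ℂ) - w)⁻¹ - (x i:ℂ)/(1+(x i:ℂ)^2)) z)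
      = fun i => ((x i:ℂ) - z)⁻¹ ^ 2 := by
    funext i
    have h1 : HasDerivAt (fun w : ℂ => (x i:ℂ) - w) (-1) z := (hasDerivAt_id z).const_sub _
    have h2 := (h1.inv (hne i z hz)).sub_const ((x i:ℂ)/(1+(x i:ℂ)^2))
    have h3 : (- (-1:ℂ)) / ((x i:ℂ) - z) ^ 2 = ((x i:ℂ) - z)⁻¹ ^ 2 := by
      rw [neg_neg, one_div, ← inv_pow]
    rw [← h3]
    exact h2.deriv
  have h' : HasSum (fun i => deriv (fun w => ((x i:ℂ) - w)⁻¹ - (x i:ℂ)/(1+(x i:ℂ)^2)) z)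
      (deriv (fun z => ∑' i, (((x i:ℂ) - z)⁻¹ - (x i:ℂ)/(1+(x i:ℂ)^2))) z) := h
  rw [heq] at h'
  exact h'.unique hsum2.hasSum

lemma nev_iter (x : ℕ → ℝ) (b c : ℝ) (hx : Summable fun i => 1 / (1 + x i ^ 2))
    (U : Set ℂ) (hUo : IsOpen U) (v C K : ℝ) (hv : 0 < v)
    (hAv : ∀ z ∈ U, ∀ i, v ≤ ‖(x i:ℂ) - z‖)
    (hCb : ∀ z ∈ U, ∀ i, 1 + x i ^ 2 ≤ C * ‖(x i:ℂ) - z‖ ^ 2)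
    (hb : ∀ i, ∀ z ∈ U, ‖((x i:ℂ) - z)⁻¹ - (x i:ℂ)/(1+(x i:ℂ)^2)‖ ≤ K * (1/(1 + x i ^ 2))) :
    ∀ (k : ℕ), ∀ z ∈ U, iteratedDeriv (k+1)
      (fun z => (b:ℂ) + (c:ℂ)*z + ∑' i, (((x i:ℂ) - z)⁻¹ - (x i:ℂ)/(1+(x i:ℂ)^2))) z
      = (if k = 0 then (c:ℂ) else 0)
        + ((Nat.factorial (k+1) : ℕ) : ℂ) * ∑' i, ((x i:ℂ) - z)⁻¹ ^ (k+2) := by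
  have hne : ∀ i, ∀ z ∈ U, (x i:ℂ) - z ≠ 0 := by
    intro i z hz h0
    have := hAv z hz i
    rw [h0] at this
    simp at this
    linarith
  intro k
  induction k with
  | zero =>
    intro z hz
    rw [iteratedDeriv_one]
    have hGAt : DifferentiableAt ℂ
        (fun z => ∑' i, (((x i:ℂ) - z)⁻¹ - (x i:ℂ)/(1+(x i:ℂ)^2))) z :=
      (nev_G_diffOn x hx U hUo K hb hne z hz).differentiableAt (hUo.mem_nhds hz)
    have hlin : HasDerivAt (fun z : ℂ => (b:ℂ) + (c:ℂ)*z) (c:ℂ) z := by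
      simpa using ((hasDerivAt_id z).const_mul (c:ℂ)).const_add (b:ℂ)
    have hGd : HasDerivAt (fun z => ∑' i, (((x i:ℂ) - z)⁻¹ - (x i:ℂ)/(1+(x i:ℂ)^2)))
        (∑' i, ((x i:ℂ) - z)⁻¹ ^ 2) z := by
      have h0 := hGAt.hasDerivAt
      rwa [nev_G_deriv x hx U hUo K hb hne z hz
        (nev_S_summable x hx v C hv 0 z (hAv z hz) (hCb z hz))] at h0
    have hF : HasDerivAt
        (fun z => (b:ℂ) + (c:ℂ)*z + ∑' i, (((x i:ℂ) - z)⁻¹ - (x i:ℂ)/(1+(x i:ℂ)^2)))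
        ((c:ℂ) + ∑' i, ((x i:ℂ) - z)⁻¹ ^ 2) z := hlin.add hGd
    rw [hF.deriv]
    simp [Nat.factorial]
  | succ k ih =>
    intro z hz
    rw [iteratedDeriv_succ]
    have hev : iteratedDeriv (k+1)
        (fun z => (b:ℂ) + (c:ℂ)*z + ∑' i, (((x i:ℂ) - z)⁻¹ - (x i:ℂ)/(1+(x i:ℂ)^2)))
        =ᶠ[nhds z] (fun z => (if k = 0 then (c:ℂ) else 0)
          + ((Nat.factorial (k+1) : ℕ) : ℂ) * ∑' i, ((x i:ℂ) - z)⁻¹ ^ (k+2)) :=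
      Filter.eventuallyEq_of_mem (hUo.mem_nhds hz) ih
    rw [hev.deriv_eq]
    have hSAt : DifferentiableAt ℂ (fun z => ∑' i, ((x i:ℂ) - z)⁻¹ ^ (k+2)) z :=
      (nev_S_diffOn x hx U hUo v C hv hAv hCb k z hz).differentiableAt (hUo.mem_nhds hz)
    have hSd : HasDerivAt (fun z => ∑' i, ((x i:ℂ) - z)⁻¹ ^ (k+2))
        (((k+2 : ℕ) : ℂ) * ∑' i, ((x i:ℂ) - z)⁻¹ ^ (k+3)) z := by
      have h0 := hSAt.hasDerivAt
      rwa [nev_S_deriv x hx U hUo v C hv hAv hCb k z hz] at h0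
    have hE : HasDerivAt (fun z => (if k = 0 then (c:ℂ) else 0)
          + ((Nat.factorial (k+1) : ℕ) : ℂ) * ∑' i, ((x i:ℂ) - z)⁻¹ ^ (k+2))
        (((Nat.factorial (k+1) : ℕ) : ℂ) * (((k+2 : ℕ) : ℂ) * ∑' i, ((x i:ℂ) - z)⁻¹ ^ (k+3))) z :=
      (hSd.const_mul _).const_add _
    rw [hE.deriv, if_neg (Nat.succ_ne_zero k)]
    push_cast [Nat.factorial_succ]
    ring

theorem stmt_1
    (x : ℕ → ℝ) (b c : ℝ) (hc : 0 ≤ c)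
    (hx : Summable fun i => 1 / (1 + (x i) ^ 2))
    (Y : ℂ → ℂ)
    (hY : ∀ w : ℂ, 0 < w.im →
      Y w = (b : ℂ) + (c : ℂ) * w
        + ∑' i : ℕ, (((x i : ℂ) - w)⁻¹ - (x i : ℂ) / (1 + (x i : ℂ) ^ 2)))
    (k : ℕ) (hk : 1 ≤ k) (w : ℂ) (hw : 0 < w.im) :
    ‖iteratedDeriv k Y w‖
      ≤ (Nat.factorial k : ℝ) * (Y w).im / w.im ^ k ∧
    (Y w).im ≤ ‖Y w‖ ∧
    ‖iteratedDeriv k Y w‖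
      ≤ (Nat.factorial k : ℝ) * ‖Y w‖ / w.im ^ k := by
  obtain ⟨n, rfl⟩ : ∃ n, k = n + 1 := ⟨k - 1, (Nat.succ_pred_eq_of_pos hk).symm⟩
  set v : ℝ := w.im with hv_def
  have hv : 0 < v := hw
  set U : Set ℂ := Metric.ball w (v/2) with hU_def
  have hUo : IsOpen U := Metric.isOpen_ball
  have hwU : w ∈ U := Metric.mem_ball_self (by positivity)
  have him : ∀ z ∈ U, v/2 ≤ z.im := by
    intro z hz
    have hd : dist z w < v/2 := Metric.mem_ball.mp hz
    have h1 : |z.im - w.im| ≤ dist z w := by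
      rw [Complex.dist_eq]
      have := Complex.abs_im_le_norm (z - w)
      simpa using this
    have := abs_lt.mp (lt_of_le_of_lt h1 hd)
    simp only [hv_def]
    linarith [this.1]
  set R : ℝ := ‖w‖ + v/2 with hR_def
  have habsz : ∀ z ∈ U, ‖z‖ ≤ R := by
    intro z hz
    have hd : dist z w < v/2 := Metric.mem_ball.mp hz
    have h1 : ‖z‖ ≤ ‖z - w‖ + ‖w‖ := by
      have := norm_add_le (z - w) w
      simpa using this
    rw [← Complex.dist_eq] at h1
    simp only [hR_def]
    linarith
  set C : ℝ := (1 + (2*R+2)^2)/(v/2)^2 + 5 with hC_def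
  set K : ℝ := (1+R) * ((1 + (2*R+2))/(v/2) + 3) with hK_def
  have hv2 : (0:ℝ) < v/2 := by positivity
  have hAv : ∀ z ∈ U, ∀ i, v/2 ≤ ‖(x i:ℂ) - z‖ :=
    fun z hz i => (him z hz).trans (nev_abs_im _ _)
  have hCb : ∀ z ∈ U, ∀ i, 1 + x i ^ 2 ≤ C * ‖(x i:ℂ) - z‖ ^ 2 :=
    fun z hz i => nev_aux1 (x i) (v/2) R hv2 z (him z hz) (habsz z hz)
  have hb : ∀ i, ∀ z ∈ U, ‖((x i:ℂ) - z)⁻¹ - (x i:ℂ)/(1+(x i:ℂ)^2)‖ ≤ K * (1/(1 + x i ^ 2)) :=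
    fun i z hz => nev_f_bound (x i) (v/2) R hv2 z (him z hz) (habsz z hz)
  -- replace Y by the explicit formula
  have hopen : IsOpen {z : ℂ | 0 < z.im} := isOpen_lt continuous_const Complex.continuous_im
  have hiterY : iteratedDeriv (n+1) Y w = iteratedDeriv (n+1)
      (fun z => (b:ℂ) + (c:ℂ)*z + ∑' i, (((x i:ℂ) - z)⁻¹ - (x i:ℂ)/(1+(x i:ℂ)^2))) w :=
    Filter.EventuallyEq.iteratedDeriv_eq _
      (Filter.eventuallyEq_of_mem (hopen.mem_nhds hw) (fun z hz => hY z hz))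
  have hform := nev_iter x b c hx U hUo (v/2) C K hv2 hAv hCb hb n w hwU
  -- the imaginary part of Y w
  set Treal : ℝ := ∑' i, (‖(x i:ℂ) - w‖ ^ 2)⁻¹ with hT_def
  have hAvw : ∀ i, v ≤ ‖(x i:ℂ) - w‖ := fun i => nev_abs_im _ _
  have hTsummable : Summable (fun i => (‖(x i:ℂ) - w‖ ^ 2)⁻¹) :=
    Summable.of_nonneg_of_le (fun i => by positivity)
      (fun i => nev_inv_sq_bound (x i) (v/2) C hv2 w (hAv w hwU i) (hCb w hwU i))
      (hx.mul_left C)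
  have hT0 : 0 ≤ Treal := tsum_nonneg (fun i => by positivity)
  have hfsummable : Summable (fun i => ((x i:ℂ) - w)⁻¹ - (x i:ℂ)/(1+(x i:ℂ)^2)) :=
    Summable.of_norm_bounded (hx.mul_left K) (fun i => hb i w hwU)
  have himY : (Y w).im = c * v + v * Treal := by
    have hGim : (∑' i, (((x i:ℂ) - w)⁻¹ - (x i:ℂ)/(1+(x i:ℂ)^2))).im = v * Treal := by
      have h1 := hfsummable.hasSum.mapL Complex.imCLM
      simp only [Complex.imCLM_apply] at h1
      have heq : (fun i => (((x i:ℂ) - w)⁻¹ - (x i:ℂ)/(1+(x i:ℂ)^2)).im)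
          = fun i => v * (‖(x i:ℂ) - w‖ ^ 2)⁻¹ := by
        funext i
        have hq : ((x i:ℂ)/(1+(x i:ℂ)^2)) = ((x i/(1+x i^2) : ℝ) : ℂ) := by push_cast; ring
        have h2 : ((x i:ℂ) - w).im = -v := by simp [hv_def]
        rw [Complex.sub_im, hq, Complex.ofReal_im, sub_zero, Complex.inv_im, h2,
          Complex.normSq_eq_norm_sq]
        field_simp
      rw [heq] at h1
      exact h1.unique ((hTsummable.hasSum.mul_left v))
    rw [hY w hw]
    simp only [Complex.add_im, Complex.ofReal_im, Complex.mul_im, Complex.ofReal_re,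
      zero_mul, add_zero, zero_add, mul_zero, hGim]
    rfl
  -- goal 2
  have goal2 : (Y w).im ≤ ‖Y w‖ := Complex.im_le_norm _
  -- norm of the sum in the derivative formula
  have hnormsum : Summable (fun i => ‖((x i:ℂ) - w)⁻¹ ^ (n+2)‖) :=
    Summable.of_nonneg_of_le (fun i => norm_nonneg _)
      (fun i => nev_normbound (x i) (v/2) C hv2 n w (hAv w hwU i) (hCb w hwU i))
      (nev_summable_u x hx (v/2) C n)
  have hS_le : ‖∑' i, ((x i:ℂ) - w)⁻¹ ^ (n+2)‖ ≤ (1/v)^n * Treal := by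
    calc ‖∑' i, ((x i:ℂ) - w)⁻¹ ^ (n+2)‖ ≤ ∑' i, ‖((x i:ℂ) - w)⁻¹ ^ (n+2)‖ :=
          norm_tsum_le_tsum_norm hnormsum
      _ ≤ ∑' i, (1/v)^n * (‖(x i:ℂ) - w‖ ^ 2)⁻¹ :=
          Summable.tsum_le_tsum (fun i => nev_pow_bound (x i) v hv n w (hAvw i)) hnormsum
            (hTsummable.mul_left _)
      _ = (1/v)^n * Treal := tsum_mul_left
  set N : ℝ := (Nat.factorial (n+1) : ℝ) with hN_def
  have hN1 : 1 ≤ N := by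
    simp only [hN_def]
    exact_mod_cast Nat.one_le_iff_ne_zero.mpr (Nat.factorial_ne_zero _)
  have goal1 : ‖iteratedDeriv (n+1) Y w‖
      ≤ (Nat.factorial (n+1) : ℝ) * (Y w).im / w.im ^ (n+1) := by
    rw [himY, hiterY, hform]
    have hrhs : (Nat.factorial (n+1) : ℝ) * (c * v + v * Treal) / w.im ^ (n+1)
        = N * c / v^n + N * Treal / v^n := by
      rw [← hv_def, ← hN_def, pow_succ]
      field_simp
    rw [hrhs]
    have hstep : ‖(if n = 0 then (c:ℂ) else 0)
        + ((Nat.factorial (n+1) : ℕ) : ℂ) * ∑' i, ((x i:ℂ) - w)⁻¹ ^ (n+2)‖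
        ≤ (if n = 0 then c else 0) + N * ((1/v)^n * Treal) := by
      refine le_trans (norm_add_le _ _) (add_le_add ?_ ?_)
      · split
        · simp [Complex.norm_real, Real.norm_eq_abs, abs_of_nonneg hc]
        · simp
      · rw [norm_mul, Complex.norm_natCast]
        exact mul_le_mul_of_nonneg_left hS_le (by positivity)
    refine hstep.trans ?_
    have h8 : N * ((1/v)^n * Treal) = N * Treal / v^n := by
      rw [one_div, inv_pow, div_eq_mul_inv]
      ring
    rw [h8]
    have h9 : (if n = 0 then c else 0) ≤ N * c / v^n := by
      split
      · next hn0 =>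
        subst hn0
        simp only [hN_def, pow_zero, Nat.factorial]
        norm_num
      · positivity
    linarith
  refine ⟨goal1, goal2, goal1.trans ?_⟩
  gcongr
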